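/- Let L be the segment from a to b with direction θ_L ∈ (θ_cover, θ_small) (as an arc in ℝ/πℤ), let c be such that segment(a,c) has direction θ_small and segment(b,c) has direction θ_cover, and let Δ be the convex hull of {a,b,c}. Let f : [a,b'] → ℝ be C¹ and α ∈ ℝ be such that Δ ⊂ dom Φ_α and θ_α(x) ∈ [θ_cover, θ_L] for all x ∈ Δ. Then Φ_α(L) ⊆ Φ_α(segment(a,c)). -/

import Mathlib

open Real MeasureTheory Set Filter
open scoped Pointwise ENNReal

noncomputable section

instance : Fact (0 < Real.pi) := ⟨Real.pi_pos⟩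

/-- Unoriented direction of a plane vector, as an element of ℝ/πℤ. -/
def dir (v : ℝ × ℝ) : AddCircle Real.pi :=
  if v.1 = 0 then ((Real.pi / 2 : ℝ) : AddCircle Real.pi)
  else ((Real.arctan (v.2 / v.1) : ℝ) : AddCircle Real.pi)

/-- Euclidean length of a plane vector. -/
def elen (v : ℝ × ℝ) : ℝ := Real.sqrt (v.1 ^ 2 + v.2 ^ 2)

/-- Open Euclidean δ-neighborhood of a plane set. -/
def enbhd (δ : ℝ) (S : Set (ℝ × ℝ)) : Set (ℝ × ℝ) := {x | ∃ y ∈ S, elen (x - y) < δ}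

/-- Membership in the closed arc `[θ₁, θ₂]` of ℝ/πℤ (standard orientation). -/
def arcMemCC (θ₁ θ₂ θ : AddCircle Real.pi) : Prop :=
  ∃ t₁ t₂ t : ℝ, (t₁ : AddCircle Real.pi) = θ₁ ∧ (t₂ : AddCircle Real.pi) = θ₂ ∧
    (t : AddCircle Real.pi) = θ ∧ t₁ ≤ t ∧ t ≤ t₂ ∧ t₂ - t₁ < Real.pi

/-- Membership in the open arc `(θ₁, θ₂)` of ℝ/πℤ (standard orientation). -/
def arcMemOO (θ₁ θ₂ θ : AddCircle Real.pi) : Prop :=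
  ∃ t₁ t₂ t : ℝ, (t₁ : AddCircle Real.pi) = θ₁ ∧ (t₂ : AddCircle Real.pi) = θ₂ ∧
    (t : AddCircle Real.pi) = θ ∧ t₁ < t ∧ t < t₂ ∧ t₂ - t₁ < Real.pi

/- ### Auxiliary lemmas -/

lemma coe_eq_coe_pi {x y : ℝ} (h : (x : AddCircle Real.pi) = y) :
    ∃ k : ℤ, x = y + k * Real.pi := by
  rw [QuotientAddGroup.eq_iff_sub_mem] at h
  obtain ⟨k, hk⟩ := AddSubgroup.mem_zmultiples_iff.mp h
  rw [zsmul_eq_mul] at hk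
  exact ⟨k, by linarith⟩

lemma cos_arctan_add_ne_zero (z : ℝ) (k : ℤ) : Real.cos (Real.arctan z + k * Real.pi) ≠ 0 := by
  intro h
  obtain ⟨n, hn⟩ := Real.cos_eq_zero_iff.mp h
  have h1 : Real.arctan z = Real.pi / 2 + ((n : ℝ) - k) * Real.pi := by push_cast at hn ⊢; linarith
  have h2 := Real.arctan_lt_pi_div_two z
  have h3 := Real.neg_pi_div_two_lt_arctan z
  have hπ := Real.pi_pos
  rcases le_or_gt 0 (n - k : ℤ) with hm | hm
  · have h4 : (0:ℝ) ≤ (n:ℝ) - k := by exact_mod_cast hm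
    linarith [mul_nonneg h4 hπ.le]
  · have h4 : (n:ℝ) - k ≤ -1 := by exact_mod_cast (by omega : (n:ℤ) - k ≤ -1)
    have hb : ((n:ℝ) - k) * Real.pi ≤ -1 * Real.pi := mul_le_mul_of_nonneg_right h4 hπ.le
    linarith

/-- Representation of a vector from a lift of its direction. -/
lemma dir_rep {v : ℝ × ℝ} (hv : v ≠ 0) {t : ℝ} (ht : (t : AddCircle Real.pi) = dir v) :
    ∃ l : ℝ, l ≠ 0 ∧ v.1 = l * Real.cos t ∧ v.2 = l * Real.sin t := by
  unfold dir at ht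
  by_cases h1 : v.1 = 0
  · rw [if_pos h1] at ht
    obtain ⟨k, hk⟩ := coe_eq_coe_pi ht
    have hcos : Real.cos t = 0 := by
      rw [Real.cos_eq_zero_iff]
      exact ⟨k, by push_cast; linarith⟩
    have hsin : Real.sin t ≠ 0 := by
      intro h
      have := Real.sin_sq_add_cos_sq t
      rw [h, hcos] at this; norm_num at this
    have hv2 : v.2 ≠ 0 := fun h2 => hv (Prod.ext h1 h2)
    exact ⟨v.2 / Real.sin t, div_ne_zero hv2 hsin, by rw [h1, hcos]; ring, by field_simp⟩
  · rw [if_neg h1] at ht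
    obtain ⟨k, hk⟩ := coe_eq_coe_pi ht
    have hcos : Real.cos t ≠ 0 := by rw [hk]; exact cos_arctan_add_ne_zero _ _
    have htan : Real.tan t = v.2 / v.1 := by
      rw [hk, Real.tan_add_int_mul_pi, Real.tan_arctan]
    rw [Real.tan_eq_sin_div_cos] at htan
    refine ⟨v.1 / Real.cos t, div_ne_zero h1 hcos, by field_simp, ?_⟩
    field_simp at htan ⊢
    linarith [htan]

/-- Normalize a closed-arc membership to given lifts of the endpoints. -/
lemma arc_norm {tc tL : ℝ} (h0 : 0 < tL - tc) (h1 : tL - tc < Real.pi)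
    {θ : AddCircle Real.pi}
    (h : arcMemCC ((tc : ℝ) : AddCircle Real.pi) ((tL : ℝ) : AddCircle Real.pi) θ) :
    ∃ r : ℝ, (r : AddCircle Real.pi) = θ ∧ tc ≤ r ∧ r ≤ tL := by
  obtain ⟨t₁, t₂, t, he1, he2, he3, hle1, hle2, hlt⟩ := h
  obtain ⟨k₁, hk₁⟩ := coe_eq_coe_pi he1
  obtain ⟨k₂, hk₂⟩ := coe_eq_coe_pi he2
  have hπ := Real.pi_pos
  have hkk : k₁ = k₂ := by
    have hge : (0:ℝ) ≤ t₂ - t₁ := by linarith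
    have h2 : t₂ - t₁ = (tL - tc) + (k₂ - k₁ : ℤ) * Real.pi := by push_cast; linarith
    by_contra hne
    rcases lt_or_gt_of_ne hne with hl | hl
    · have h4 : (1:ℝ) ≤ ((k₂ - k₁ : ℤ):ℝ) := by exact_mod_cast (by omega : (1:ℤ) ≤ k₂ - k₁)
      have hb : 1 * Real.pi ≤ ((k₂ - k₁ : ℤ):ℝ) * Real.pi := mul_le_mul_of_nonneg_right h4 hπ.le
      linarith
    · have h4 : ((k₂ - k₁ : ℤ):ℝ) ≤ -1 := by exact_mod_cast (by omega : (k₂:ℤ) - k₁ ≤ -1)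
      have hb : ((k₂ - k₁ : ℤ):ℝ) * Real.pi ≤ -1 * Real.pi := mul_le_mul_of_nonneg_right h4 hπ.le
      linarith
  refine ⟨t - k₁ * Real.pi, ?_, by linarith, by rw [hkk] at hk₁ ⊢; linarith⟩
  rw [← he3, QuotientAddGroup.eq_iff_sub_mem]
  exact AddSubgroup.mem_zmultiples_iff.mpr ⟨-k₁, by rw [zsmul_eq_mul]; push_cast; ring⟩

/-- Sign version of the mean value inequality. -/
lemma mvt_sign {F D : ℝ → ℝ} {u₁ u₂ σ : ℝ} (h : u₁ ≤ u₂)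
    (hF : ∀ t ∈ Set.Icc u₁ u₂, HasDerivAt F (D t) t)
    (hD : ∀ t ∈ Set.Icc u₁ u₂, 0 ≤ σ * D t) : 0 ≤ σ * (F u₂ - F u₁) := by
  rcases eq_or_lt_of_le h with rfl | hlt
  · simp
  · have hcont : ContinuousOn F (Set.Icc u₁ u₂) :=
      fun t ht => (hF t ht).continuousAt.continuousWithinAt
    obtain ⟨ξ, hξ, hsl⟩ := exists_hasDerivAt_eq_slope F D hlt hcont
      (fun t ht => hF t (Set.Ioo_subset_Icc_self ht))
    have h2 := hD ξ (Set.Ioo_subset_Icc_self hξ)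
    have hne : u₂ - u₁ ≠ 0 := ne_of_gt (sub_pos.mpr hlt)
    have h3 : F u₂ - F u₁ = D ξ * (u₂ - u₁) := by
      field_simp at hsl; linarith [hsl]
    have h4 : 0 ≤ (σ * D ξ) * (u₂ - u₁) := mul_nonneg h2 (sub_pos.mpr hlt).le
    rw [h3]; linarith [h4]

theorem stmt4 (a' b' : ℝ) (ha'b' : a' ≤ b') (f f' : ℝ → ℝ)
    (hderiv : ∀ t ∈ Set.Icc a' b', HasDerivAt f (f' t) t)
    (hcont : ContinuousOn f' (Set.Icc a' b'))
    (p q c : ℝ × ℝ) (hpq : p ≠ q) (hcp : c ≠ p) (hcq : c ≠ q)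
    (θsmall θcover : AddCircle Real.pi)
    (hθL : arcMemOO θcover θsmall (dir (q - p)))
    (hc1 : dir (c - p) = θsmall) (hc2 : dir (c - q) = θcover)
    (α : ℝ)
    (hdom : convexHull ℝ ({p, q, c} : Set (ℝ × ℝ)) ⊆
      Set.Icc (α - b') (α - a') ×ˢ (Set.univ : Set ℝ))
    (hang : ∀ x ∈ convexHull ℝ ({p, q, c} : Set (ℝ × ℝ)),
      arcMemCC θcover (dir (q - p)) (dir (1, f' (α - x.1)))) :
    (fun x : ℝ × ℝ => x.2 + f (α - x.1)) '' segment ℝ p q ⊆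
      (fun x : ℝ × ℝ => x.2 + f (α - x.1)) '' segment ℝ p c := by
  have hπ := Real.pi_pos
  set K := convexHull ℝ ({p, q, c} : Set (ℝ × ℝ)) with hK
  set s : ℝ × ℝ → ℝ := fun x => f' (α - x.1) with hs_def
  -- lifts of the three directions
  obtain ⟨tc, ts, tL, hec, hes, heL, h1, h2, h3⟩ := hθL
  -- vector representations
  have hqp : q - p ≠ 0 := sub_ne_zero.mpr (Ne.symm hpq)
  have hcpne : c - p ≠ 0 := sub_ne_zero.mpr hcp
  have hcqne : c - q ≠ 0 := sub_ne_zero.mpr hcq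
  obtain ⟨l, hl0, hl1, hl2⟩ := dir_rep hqp heL
  obtain ⟨m, hm0, hm1, hm2⟩ := dir_rep hcqne (hec.trans hc2.symm)
  obtain ⟨n, hn0, hn1, hn2⟩ := dir_rep hcpne (hes.trans hc1.symm)
  have hl1' : q.1 - p.1 = l * Real.cos tL := by simpa using hl1
  have hl2' : q.2 - p.2 = l * Real.sin tL := by simpa using hl2
  have hm1' : c.1 - q.1 = m * Real.cos tc := by simpa using hm1
  have hm2' : c.2 - q.2 = m * Real.sin tc := by simpa using hm2
  have hn1' : c.1 - p.1 = n * Real.cos ts := by simpa using hn1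
  have hn2' : c.2 - p.2 = n * Real.sin ts := by simpa using hn2
  -- the key sign fact : l * m < 0
  have hS1 : 0 < Real.sin (ts - tc) := Real.sin_pos_of_pos_of_lt_pi (by linarith) (by linarith)
  have hS2 : 0 < Real.sin (ts - tL) := Real.sin_pos_of_pos_of_lt_pi (by linarith) (by linarith)
  have hkey : m * Real.sin (ts - tc) + l * Real.sin (ts - tL) = 0 := by
    have e1 : n * Real.cos ts = m * Real.cos tc + l * Real.cos tL := by
      rw [← hl1', ← hm1', ← hn1']; ring
    have e2 : n * Real.sin ts = m * Real.sin tc + l * Real.sin tL := by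
      rw [← hl2', ← hm2', ← hn2']; ring
    rw [Real.sin_sub, Real.sin_sub]
    linear_combination Real.cos ts * e2 - Real.sin ts * e1
  have hlm : l * m < 0 := by
    have hk2 : l * m * Real.sin (ts - tc) = -(l * l) * Real.sin (ts - tL) := by
      linear_combination l * hkey
    have hll : 0 < l * l := mul_self_pos.mpr hl0
    nlinarith [mul_pos hll hS2]
  -- arc bounds for hang
  have h0' : 0 < tL - tc := by linarith
  have hLc : tL - tc < Real.pi := by linarith
  -- membership into the strip
  have hmaps : ∀ x ∈ K, α - x.1 ∈ Set.Icc a' b' := by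
    intro x hx
    have hx' := hdom hx
    rw [Set.mem_prod] at hx'
    obtain ⟨⟨hxa, hxb⟩, -⟩ := hx'
    exact ⟨by linarith, by linarith⟩
  -- pointwise sign structure on K
  have hpoint : ∀ x ∈ K,
      0 ≤ ((q.2 - p.2) - s x * (q.1 - p.1)) * ((c.2 - q.2) - s x * (c.1 - q.1)) ∧
      ((c.2 - p.2) - s x * (c.1 - p.1)) ≠ 0 := by
    intro x hx
    have harc := hang x hx
    rw [← hec, ← heL] at harc
    obtain ⟨r, hrθ, hr1, hr2⟩ := arc_norm h0' hLc harc
    have hdir : dir (1, s x) = ((Real.arctan (s x) : ℝ) : AddCircle Real.pi) := by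
      simp [dir]
    rw [hdir] at hrθ
    obtain ⟨k, hk⟩ := coe_eq_coe_pi hrθ
    have hcosr : Real.cos r ≠ 0 := by rw [hk]; exact cos_arctan_add_ne_zero _ _
    have htan : Real.sin r = s x * Real.cos r := by
      have ht : Real.tan r = s x := by rw [hk, Real.tan_add_int_mul_pi, Real.tan_arctan]
      rw [Real.tan_eq_sin_div_cos] at ht
      field_simp at ht
      linarith [ht]
    have hApos : ((q.2 - p.2) - s x * (q.1 - p.1)) * Real.cos r = l * Real.sin (tL - r) := by
      rw [hl1', hl2', Real.sin_sub]
      linear_combination (l * Real.cos tL) * htan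
    have hBpos : ((c.2 - q.2) - s x * (c.1 - q.1)) * Real.cos r = m * Real.sin (tc - r) := by
      rw [hm1', hm2', Real.sin_sub]
      linear_combination (m * Real.cos tc) * htan
    have hCpos : ((c.2 - p.2) - s x * (c.1 - p.1)) * Real.cos r = n * Real.sin (ts - r) := by
      rw [hn1', hn2', Real.sin_sub]
      linear_combination (n * Real.cos ts) * htan
    have sL : 0 ≤ Real.sin (tL - r) :=
      Real.sin_nonneg_of_nonneg_of_le_pi (by linarith) (by linarith)
    have sc : Real.sin (tc - r) ≤ 0 := by
      have hge : 0 ≤ Real.sin (r - tc) :=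
        Real.sin_nonneg_of_nonneg_of_le_pi (by linarith) (by linarith)
      rw [show tc - r = -(r - tc) by ring, Real.sin_neg]
      linarith
    have ss : 0 < Real.sin (ts - r) :=
      Real.sin_pos_of_pos_of_lt_pi (by linarith) (by linarith)
    constructor
    · have hcsq : 0 < Real.cos r * Real.cos r := mul_self_pos.mpr hcosr
      have hprod : (((q.2 - p.2) - s x * (q.1 - p.1)) * ((c.2 - q.2) - s x * (c.1 - q.1))) *
          (Real.cos r * Real.cos r) = (l * m) * (Real.sin (tL - r) * Real.sin (tc - r)) := by
        linear_combination (((c.2 - q.2) - s x * (c.1 - q.1)) * Real.cos r) * hApos +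
          (l * Real.sin (tL - r)) * hBpos
      have hsp : Real.sin (tL - r) * Real.sin (tc - r) ≤ 0 :=
        mul_nonpos_iff.mpr (Or.inl ⟨sL, sc⟩)
      have hrhs : 0 ≤ (l * m) * (Real.sin (tL - r) * Real.sin (tc - r)) :=
        mul_nonneg_iff.mpr (Or.inr ⟨hlm.le, hsp⟩)
      by_contra hneg
      push_neg at hneg
      have hlt := mul_neg_of_neg_of_pos hneg hcsq
      rw [hprod] at hlt
      linarith
    · intro hC0
      rw [hC0, zero_mul] at hCpos
      exact (mul_ne_zero hn0 (ne_of_gt ss)) hCpos.symm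
  -- continuity and connectedness
  have hpK : p ∈ K := subset_convexHull ℝ _ (by simp)
  have hqK : q ∈ K := subset_convexHull ℝ _ (by simp)
  have hcK : c ∈ K := subset_convexHull ℝ _ (by simp)
  have hsC : ContinuousOn s K :=
    hcont.comp ((continuous_const.sub continuous_fst).continuousOn) hmaps
  have hCcont : ContinuousOn (fun x => (c.2 - p.2) - s x * (c.1 - p.1)) K :=
    continuousOn_const.sub (hsC.mul continuousOn_const)
  have hKconn : IsPreconnected K := (convex_convexHull ℝ _).isPreconnected
  -- uniform sign σ
  obtain ⟨σ, hσ1, hσpos⟩ : ∃ σ : ℝ, (σ = 1 ∨ σ = -1) ∧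
      ∀ x ∈ K, 0 < σ * ((c.2 - p.2) - s x * (c.1 - p.1)) := by
    rcases ((hpoint p hpK).2).lt_or_gt with hneg | hpos
    · refine ⟨-1, Or.inr rfl, ?_⟩
      intro x hx
      by_contra hcon
      push_neg at hcon
      have hCx : 0 < ((c.2 - p.2) - s x * (c.1 - p.1)) :=
        lt_of_le_of_ne (by linarith) (Ne.symm (hpoint x hx).2)
      obtain ⟨y, hyK, hy0⟩ := hKconn.intermediate_value₂ hpK hx hCcont
        (continuousOn_const : ContinuousOn (fun _ => (0:ℝ)) K) hneg.le hCx.le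
      exact (hpoint y hyK).2 hy0
    · refine ⟨1, Or.inl rfl, ?_⟩
      intro x hx
      by_contra hcon
      push_neg at hcon
      have hCx : ((c.2 - p.2) - s x * (c.1 - p.1)) < 0 :=
        lt_of_le_of_ne (by linarith) ((hpoint x hx).2)
      obtain ⟨y, hyK, hy0⟩ := hKconn.intermediate_value₂ hx hpK hCcont
        (continuousOn_const : ContinuousOn (fun _ => (0:ℝ)) K) hCx.le hpos.le
      exact (hpoint y hyK).2 hy0
  have hσsq : σ * σ = 1 := by rcases hσ1 with rfl | rfl <;> norm_num
  -- uniform signs for the two other directional derivatives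
  have hAσ : ∀ x ∈ K, 0 ≤ σ * ((q.2 - p.2) - s x * (q.1 - p.1)) := by
    intro x hx
    have hAB := (hpoint x hx).1
    have hC := hσpos x hx
    by_contra hcon
    push_neg at hcon
    have h5 : (σ * ((q.2 - p.2) - s x * (q.1 - p.1))) *
        (σ * ((c.2 - p.2) - s x * (c.1 - p.1))) < 0 := mul_neg_of_neg_of_pos hcon hC
    have h6 : (σ * ((q.2 - p.2) - s x * (q.1 - p.1))) *
        (σ * ((c.2 - p.2) - s x * (c.1 - p.1))) =
        ((q.2 - p.2) - s x * (q.1 - p.1)) * ((q.2 - p.2) - s x * (q.1 - p.1)) +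
        ((q.2 - p.2) - s x * (q.1 - p.1)) * ((c.2 - q.2) - s x * (c.1 - q.1)) := by
      linear_combination (((q.2 - p.2) - s x * (q.1 - p.1)) *
        ((c.2 - p.2) - s x * (c.1 - p.1))) * hσsq
    rw [h6] at h5
    have h7 := mul_self_nonneg ((q.2 - p.2) - s x * (q.1 - p.1))
    linarith
  have hBσ : ∀ x ∈ K, 0 ≤ σ * ((c.2 - q.2) - s x * (c.1 - q.1)) := by
    intro x hx
    have hAB := (hpoint x hx).1
    have hC := hσpos x hx
    by_contra hcon
    push_neg at hcon
    have h5 : (σ * ((c.2 - q.2) - s x * (c.1 - q.1))) *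
        (σ * ((c.2 - p.2) - s x * (c.1 - p.1))) < 0 := mul_neg_of_neg_of_pos hcon hC
    have h6 : (σ * ((c.2 - q.2) - s x * (c.1 - q.1))) *
        (σ * ((c.2 - p.2) - s x * (c.1 - p.1))) =
        ((c.2 - q.2) - s x * (c.1 - q.1)) * ((c.2 - q.2) - s x * (c.1 - q.1)) +
        ((q.2 - p.2) - s x * (q.1 - p.1)) * ((c.2 - q.2) - s x * (c.1 - q.1)) := by
      linear_combination (((c.2 - q.2) - s x * (c.1 - q.1)) *
        ((c.2 - p.2) - s x * (c.1 - p.1))) * hσsq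
    rw [h6] at h5
    have h7 := mul_self_nonneg ((c.2 - q.2) - s x * (c.1 - q.1))
    linarith
  -- derivative along segments
  have hsegK : ∀ a b : ℝ × ℝ, a ∈ K → b ∈ K → ∀ t ∈ Set.Icc (0:ℝ) 1, a + t • (b - a) ∈ K := by
    intro a b ha hb t ht
    have hmem : a + t • (b - a) ∈ segment ℝ a b := by
      rw [segment_eq_image']
      exact ⟨t, ht, rfl⟩
    exact (convex_convexHull ℝ _).segment_subset ha hb hmem
  have hΦderiv : ∀ (x0 u : ℝ × ℝ) (t : ℝ), x0 + t • u ∈ K →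
      HasDerivAt (fun τ : ℝ => (x0 + τ • u).2 + f (α - (x0 + τ • u).1))
        (u.2 - s (x0 + t • u) * u.1) t := by
    intro x0 u t hmem
    have hmem' : α - (x0.1 + t * u.1) ∈ Set.Icc a' b' := by
      have := hmaps _ hmem
      simpa [Prod.fst_add, Prod.smul_fst, smul_eq_mul] using this
    have hg : HasDerivAt (fun τ : ℝ => α - (x0.1 + τ * u.1)) (-u.1) t := by
      simpa using (((hasDerivAt_id t).mul_const u.1).const_add x0.1).const_sub α
    have hfg : HasDerivAt (fun τ : ℝ => f (α - (x0.1 + τ * u.1)))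
        (f' (α - (x0.1 + t * u.1)) * (-u.1)) t := by
      simpa [Function.comp_def] using (hderiv _ hmem').comp t hg
    have hlin : HasDerivAt (fun τ : ℝ => x0.2 + τ * u.2) u.2 t := by
      simpa using ((hasDerivAt_id t).mul_const u.2).const_add x0.2
    have hsum := hlin.add hfg
    have hres : HasDerivAt (fun τ : ℝ => (x0.2 + τ * u.2) + f (α - (x0.1 + τ * u.1)))
        (u.2 - f' (α - (x0.1 + t * u.1)) * u.1) t := by
      exact hsum.congr_deriv (by ring)
    simpa [hs_def, Prod.fst_add, Prod.snd_add, Prod.smul_fst, Prod.smul_snd, smul_eq_mul]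
      using hres
  -- unpack the point z on segment p q
  rintro _ ⟨z, hz, rfl⟩
  rw [segment_eq_image'] at hz
  obtain ⟨t₀, ht₀, hzeq⟩ := hz
  -- the path p → q
  have hFd : ∀ t ∈ Set.Icc (0:ℝ) 1,
      HasDerivAt (fun τ : ℝ => (p + τ • (q - p)).2 + f (α - (p + τ • (q - p)).1))
        ((q - p).2 - s (p + t • (q - p)) * (q - p).1) t :=
    fun t ht => hΦderiv p (q - p) t (hsegK p q hpK hqK t ht)
  have hFsign : ∀ t ∈ Set.Icc (0:ℝ) 1,
      0 ≤ σ * ((q - p).2 - s (p + t • (q - p)) * (q - p).1) := by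
    intro t ht
    have := hAσ _ (hsegK p q hpK hqK t ht)
    simpa [Prod.fst_sub, Prod.snd_sub] using this
  have hleft : 0 ≤ σ * (((p + t₀ • (q - p)).2 + f (α - (p + t₀ • (q - p)).1)) -
      ((p + (0:ℝ) • (q - p)).2 + f (α - (p + (0:ℝ) • (q - p)).1))) := by
    refine mvt_sign ht₀.1 (fun t ht => hFd t ⟨ht.1, le_trans ht.2 ht₀.2⟩)
      (fun t ht => hFsign t ⟨ht.1, le_trans ht.2 ht₀.2⟩)
  have hright : 0 ≤ σ * (((p + (1:ℝ) • (q - p)).2 + f (α - (p + (1:ℝ) • (q - p)).1)) -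
      ((p + t₀ • (q - p)).2 + f (α - (p + t₀ • (q - p)).1))) := by
    refine mvt_sign ht₀.2 (fun t ht => hFd t ⟨le_trans ht₀.1 ht.1, ht.2⟩)
      (fun t ht => hFsign t ⟨le_trans ht₀.1 ht.1, ht.2⟩)
  -- the path q → c
  have hGd : ∀ t ∈ Set.Icc (0:ℝ) 1,
      HasDerivAt (fun τ : ℝ => (q + τ • (c - q)).2 + f (α - (q + τ • (c - q)).1))
        ((c - q).2 - s (q + t • (c - q)) * (c - q).1) t :=
    fun t ht => hΦderiv q (c - q) t (hsegK q c hqK hcK t ht)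
  have hGsign : ∀ t ∈ Set.Icc (0:ℝ) 1,
      0 ≤ σ * ((c - q).2 - s (q + t • (c - q)) * (c - q).1) := by
    intro t ht
    have := hBσ _ (hsegK q c hqK hcK t ht)
    simpa [Prod.fst_sub, Prod.snd_sub] using this
  have hqc : 0 ≤ σ * (((q + (1:ℝ) • (c - q)).2 + f (α - (q + (1:ℝ) • (c - q)).1)) -
      ((q + (0:ℝ) • (c - q)).2 + f (α - (q + (0:ℝ) • (c - q)).1))) :=
    mvt_sign zero_le_one hGd hGsign
  -- clean up endpoint values
  have ep0 : p + (0:ℝ) • (q - p) = p := by simp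
  have ep1 : p + (1:ℝ) • (q - p) = q := by simp
  have eq0 : q + (0:ℝ) • (c - q) = q := by simp
  have eq1 : q + (1:ℝ) • (c - q) = c := by simp
  rw [ep0] at hleft
  rw [ep1] at hright
  have hzeq' : p + t₀ • (q - p) = z := hzeq
  rw [hzeq'] at hleft hright
  rw [eq0, eq1] at hqc
  -- Φ z lies between Φ p and Φ c
  have hmem_uIcc : (z.2 + f (α - z.1)) ∈ Set.uIcc (p.2 + f (α - p.1)) (c.2 + f (α - c.1)) := by
    rw [Set.mem_uIcc]
    rcases hσ1 with rfl | rfl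
    · left; constructor <;> linarith [hleft, hright, hqc]
    · right; constructor <;> linarith [hleft, hright, hqc]
  -- intermediate value along the path p → c
  have hHcont : ContinuousOn (fun τ : ℝ => (p + τ • (c - p)).2 + f (α - (p + τ • (c - p)).1))
      (Set.uIcc (0:ℝ) 1) := by
    rw [Set.uIcc_of_le zero_le_one]
    exact fun t ht => (hΦderiv p (c - p) t (hsegK p c hpK hcK t ht)).continuousAt.continuousWithinAt
  have hIVT := intermediate_value_uIcc hHcont
  have hep0 : p + (0:ℝ) • (c - p) = p := by simp
  have hep1 : p + (1:ℝ) • (c - p) = c := by simp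
  rw [hep0, hep1] at hIVT
  obtain ⟨τ, hτ, hτeq⟩ := hIVT hmem_uIcc
  rw [Set.uIcc_of_le zero_le_one] at hτ
  refine ⟨p + τ • (c - p), ?_, ?_⟩
  · rw [segment_eq_image']
    exact ⟨τ, hτ, rfl⟩
  · simpa using hτeq
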